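/- Let n ≥ 2 be a natural number and let M be any closed subspace of ℓ¹ with codimension < n. Then sup{‖σ(x)‖_∞ : x ∈ M, ‖x‖₁ ≤ 1} ≥ 1/2. (Consequently the n-th Gelfand number of σ satisfies c_n(σ) ≥ 1/2.) -/

import Mathlib

noncomputable section

/-- The space `ℓ¹` of absolutely summable real sequences. -/
abbrev ell1 : Type := lp (fun _ : ℕ => ℝ) 1

/-- The space `ℓ^∞` of bounded real sequences with the supremum norm. -/
abbrev ellInf : Type := lp (fun _ : ℕ => ℝ) ⊤

/-- The subspace of `ℓ^∞` consisting of convergent sequences. -/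
def convSubspace : Submodule ℝ ellInf where
  carrier := {x | ∃ L : ℝ, Filter.Tendsto (fun k => x k) Filter.atTop (nhds L)}
  add_mem' := by
    rintro x y ⟨L, hL⟩ ⟨M, hM⟩
    exact ⟨L + M, by simpa [lp.coeFn_add, Pi.add_apply] using hL.add hM⟩
  zero_mem' :=
    ⟨0, by simpa [lp.coeFn_zero] using
      (tendsto_const_nhds : Filter.Tendsto (fun _ : ℕ => (0:ℝ)) _ _)⟩
  smul_mem' := by
    rintro c x ⟨L, hL⟩
    exact ⟨c * L, by simpa [lp.coeFn_smul, Pi.smul_apply, smul_eq_mul] using hL.const_mul c⟩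

/-- The space `c` of convergent real sequences, normed by the supremum norm. -/
abbrev cSpace : Type := ↥convSubspace

/-- `σ` is the summation operator: `σ(x)ₖ = ∑_{j=1}^k x_j` (`0`-indexed here). -/
def IsSummation (σ : ell1 →L[ℝ] cSpace) : Prop :=
  ∀ x : ell1, ∀ k : ℕ, (↑(σ x) : ellInf) k = ∑ j ∈ Finset.range (k + 1), x j

lemma cnorm_eq (y : cSpace) : ‖y‖ = ‖(y : ellInf)‖ := rfl

lemma cnorm_smul (c : ℝ) (y : cSpace) : ‖c • y‖ = ‖c‖ * ‖y‖ := by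
  rw [cnorm_eq, cnorm_eq]
  have h : ((c • y : cSpace) : ellInf) = c • (y : ellInf) := rfl
  rw [h, norm_smul]

lemma sigma_bound (σ : ell1 →L[ℝ] cSpace) : ∃ C : ℝ, 0 < C ∧ ∀ z : ell1, ‖σ z‖ ≤ C * ‖z‖ := by
  obtain ⟨r, hr, hball⟩ :=
    Metric.continuousAt_iff.mp (σ.continuous.continuousAt (x := (0:ell1))) 1 one_pos
  refine ⟨2/r, by positivity, fun z => ?_⟩
  rcases eq_or_ne z 0 with rfl | hz
  · simp
  · have hz0 : 0 < ‖z‖ := norm_pos_iff.mpr hz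
    set c : ℝ := r/(2*‖z‖) with hc
    have hcpos : 0 < c := by positivity
    have hcz : c * ‖z‖ = r/2 := by
      rw [hc]; field_simp
    have hw : dist (c • z) (0:ell1) < r := by
      rw [dist_zero_right, norm_smul, Real.norm_of_nonneg hcpos.le, hcz]
      linarith
    have h1 : ‖σ (c • z)‖ < 1 := by
      have := hball hw
      rwa [map_zero, dist_zero_right] at this
    have h2 : ‖σ (c • z)‖ = c * ‖σ z‖ := by
      rw [map_smul, cnorm_smul, Real.norm_of_nonneg hcpos.le]
    rw [h2] at h1
    have h3 : ‖σ z‖ < 1 / c := (lt_div_iff₀ hcpos).mpr (by linarith [mul_comm c ‖σ z‖])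
    have h4 : 1 / c = 2 / r * ‖z‖ := by
      rw [hc]; field_simp
    linarith [h3, h4.symm.le]

set_option maxHeartbeats 2000000 in
set_option synthInstance.maxHeartbeats 2000000 in
/-- Lower bound for the Gelfand numbers of the summation operator: for any closed subspace
`M ⊆ ℓ¹` of codimension `< n` (`n ≥ 2`), `sup {‖σ(x)‖_∞ : x ∈ M, ‖x‖₁ ≤ 1} ≥ 1/2`. -/
theorem gelfand_lower_bound_summation (n : ℕ) (hn : 2 ≤ n)
    (σ : ell1 →L[ℝ] cSpace) (hσ : IsSummation σ)
    (M : Submodule ℝ ell1) (hMclosed : IsClosed (M : Set ell1))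
    (hM : Module.rank ℝ (ell1 ⧸ M) < (n : Cardinal)) :
    1 / 2 ≤ sSup {s : ℝ | ∃ x : ell1, x ∈ M ∧ ‖x‖ ≤ 1 ∧ s = ‖σ x‖} := by
  classical
  haveI : IsClosed (M : Set ell1) := hMclosed
  haveI : NormedSpace ℝ cSpace := inferInstance
  obtain ⟨C, hC0, hC⟩ : ∃ C : ℝ, 0 < C ∧ ∀ z : ell1, ‖σ z‖ ≤ C * ‖z‖ := sigma_bound σ
  have hσ0 : (0:ℝ) ≤ C := hC0.le
  set S := {s : ℝ | ∃ x : ell1, x ∈ M ∧ ‖x‖ ≤ 1 ∧ s = ‖σ x‖} with hSdef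
  have hbdd : BddAbove S := by
    refine ⟨C, ?_⟩
    rintro s ⟨x, hxM, hx1, rfl⟩
    calc ‖σ x‖ ≤ C * ‖x‖ := hC x
      _ ≤ C * 1 := mul_le_mul_of_nonneg_left hx1 hσ0
      _ = C := mul_one _
  have key : ∀ ε : ℝ, 0 < ε → (1:ℝ)/2 - ε ≤ sSup S := by
    intro ε hε
    haveI : FiniteDimensional ℝ (ell1 ⧸ M) :=
      Module.rank_lt_aleph0_iff.mp (hM.trans (Cardinal.nat_lt_aleph0 n))
    set δ : ℝ := ε / (C + 1) with hδdef
    have hδ : 0 < δ := div_pos hε (by linarith)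
    set e : ℕ → ell1 := fun i => lp.single 1 i (1:ℝ) with he
    have hnorme : ∀ i, ‖e i‖ = 1 := fun i => by
      exact (lp.norm_single (p := (1 : ENNReal)) (E := fun _ : ℕ => ℝ) (by norm_num)
          i (1:ℝ)).trans (by norm_num)
    -- pigeonhole in the finite-dimensional quotient
    have hball : ∀ i : ℕ,
        (Submodule.Quotient.mk (e i) : ell1 ⧸ M) ∈ Metric.closedBall (0 : ell1 ⧸ M) 1 := by
      intro i
      rw [Metric.mem_closedBall, dist_zero_right]
      calc ‖(Submodule.Quotient.mk (e i) : ell1 ⧸ M)‖ ≤ ‖e i‖ :=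
            Submodule.Quotient.norm_mk_le M (e i)
        _ = 1 := hnorme i
    obtain ⟨t, htfin, hcov⟩ :=
      Metric.totallyBounded_iff.mp
        ((isCompact_closedBall (0 : ell1 ⧸ M) 1).totallyBounded) (δ/4) (by linarith)
    have hchoice : ∀ i : ℕ, ∃ y ∈ t,
        (Submodule.Quotient.mk (e i) : ell1 ⧸ M) ∈ Metric.ball y (δ/4) := by
      intro i
      have := hcov (hball i)
      simpa using this
    choose g hgt hgball using hchoice
    haveI : Finite t := htfin.to_subtype
    obtain ⟨i, j, hij, hgij⟩ :=
      Finite.exists_ne_map_eq_of_infinite (fun i : ℕ => (⟨g i, hgt i⟩ : t))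
    have hgeq : g i = g j := congrArg Subtype.val hgij
    have hqdist : ‖(Submodule.Quotient.mk (e i - e j) : ell1 ⧸ M)‖ < δ/2 := by
      have h1 := hgball i
      have h2 := hgball j
      rw [Metric.mem_ball] at h1 h2
      have : (Submodule.Quotient.mk (e i - e j) : ell1 ⧸ M) =
          Submodule.Quotient.mk (e i) - Submodule.Quotient.mk (e j) := by
        simp [Submodule.Quotient.mk_sub]
      rw [this, ← dist_eq_norm]
      calc dist (Submodule.Quotient.mk (e i) : ell1 ⧸ M) (Submodule.Quotient.mk (e j))
          ≤ dist (Submodule.Quotient.mk (e i) : ell1 ⧸ M) (g i)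
            + dist (g i) (Submodule.Quotient.mk (e j) : ell1 ⧸ M) := dist_triangle _ _ _
        _ < δ/4 + δ/4 := by
            refine add_lt_add h1 ?_
            rw [hgeq, dist_comm]
            exact h2
        _ = δ/2 := by ring
    obtain ⟨m, hmmk, hmnorm⟩ :=
      Submodule.Quotient.norm_mk_lt (Submodule.Quotient.mk (e i - e j) : ell1 ⧸ M)
        (show (0:ℝ) < δ/2 by linarith)
    have hmδ : ‖m‖ < δ := by linarith
    have hwM : (e i - e j) - m ∈ M := (Submodule.Quotient.eq M).mp hmmk.symm
    set x : ell1 := (1/2 : ℝ) • ((e i - e j) - m) with hx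
    have hxM : x ∈ M := M.smul_mem _ hwM
    set v : ell1 := (1/2 : ℝ) • (e i - e j) with hv
    have hxv : ‖x - v‖ ≤ δ/2 := by
      have hxveq : x - v = -((1/2 : ℝ) • m) := by
        rw [hx, hv, smul_sub]
        abel
      rw [hxveq, norm_neg, norm_smul]
      have : ‖(1/2 : ℝ)‖ = 1/2 := by norm_num
      rw [this]
      linarith
    have hvnorm : ‖v‖ ≤ 1 := by
      rw [hv, norm_smul]
      have h2 : ‖e i - e j‖ ≤ 2 := by
        calc ‖e i - e j‖ ≤ ‖e i‖ + ‖e j‖ := norm_sub_le _ _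
          _ = 2 := by rw [hnorme i, hnorme j]; norm_num
      have : ‖(1/2 : ℝ)‖ = 1/2 := by norm_num
      rw [this]
      linarith
    have hxnorm : ‖x‖ ≤ 1 + δ := by
      calc ‖x‖ = ‖v + (x - v)‖ := by congr 1; abel
        _ ≤ ‖v‖ + ‖x - v‖ := norm_add_le _ _
        _ ≤ 1 + δ/2 := add_le_add hvnorm hxv
        _ ≤ 1 + δ := by linarith
    -- lower bound for ‖σ v‖
    have hσv : (1:ℝ)/2 ≤ ‖σ v‖ := by
      set k := min i j with hk
      have hcoe : ∀ tt : ℕ, v tt = (1/2 : ℝ) * ((e i) tt - (e j) tt) := by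
        intro tt
        have h1 : (v : ∀ _ : ℕ, ℝ) = (1/2 : ℝ) • ((e i : ∀ _ : ℕ, ℝ) - (e j : ∀ _ : ℕ, ℝ)) := by
          rw [hv, lp.coeFn_smul, lp.coeFn_sub]
        rw [h1]
        simp [smul_eq_mul]
      have hsum : ∀ (a : ℕ), ∑ tt ∈ Finset.range (k+1), (e a) tt
          = if a ∈ Finset.range (k+1) then (1:ℝ) else 0 := by
        intro a
        simp only [he, lp.single_apply]
        rw [Finset.sum_pi_single']
      have hval : (↑(σ v) : ellInf) k =
          (1/2 : ℝ) * ((if i ∈ Finset.range (k+1) then (1:ℝ) else 0)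
            - (if j ∈ Finset.range (k+1) then (1:ℝ) else 0)) := by
        rw [hσ v k, Finset.sum_congr rfl (fun tt _ => hcoe tt), ← Finset.mul_sum,
          Finset.sum_sub_distrib, hsum i, hsum j]
      have habs : |(↑(σ v) : ellInf) k| = 1/2 := by
        rw [hval]
        rcases hij.lt_or_gt with h | h
        · have hki : k = i := min_eq_left h.le
          rw [if_pos (Finset.mem_range.mpr (by omega)), if_neg (by rw [Finset.mem_range]; omega)]
          norm_num
        · have hkj : k = j := min_eq_right h.le
          rw [if_neg (by rw [Finset.mem_range]; omega), if_pos (Finset.mem_range.mpr (by omega))]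
          norm_num
      calc (1:ℝ)/2 = |(↑(σ v) : ellInf) k| := habs.symm
        _ = ‖(↑(σ v) : ellInf) k‖ := (Real.norm_eq_abs _).symm
        _ ≤ ‖(↑(σ v) : ellInf)‖ := lp.norm_apply_le_norm ENNReal.top_ne_zero _ k
        _ = ‖σ v‖ := rfl
    have hσx : 1/2 - C * (δ/2) ≤ ‖σ x‖ := by
      have h1 : ‖σ v - σ x‖ ≤ C * (δ/2) := by
        rw [← map_sub]
        calc ‖σ (v - x)‖ ≤ C * ‖v - x‖ := hC _
          _ ≤ C * (δ/2) := by
              refine mul_le_mul_of_nonneg_left ?_ hσ0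
              rwa [norm_sub_rev]
      have h2 : ‖σ v‖ - ‖σ x‖ ≤ ‖σ v - σ x‖ := norm_sub_norm_le _ _
      linarith
    have h1δ : (0:ℝ) < 1 + δ := by linarith
    set y : ell1 := (1 + δ)⁻¹ • x with hy
    have hyM : y ∈ M := M.smul_mem _ hxM
    have hynorm : ‖y‖ ≤ 1 := by
      rw [hy, norm_smul, norm_inv, Real.norm_of_nonneg h1δ.le]
      calc (1+δ)⁻¹ * ‖x‖ ≤ (1+δ)⁻¹ * (1+δ) :=
            mul_le_mul_of_nonneg_left hxnorm (inv_nonneg.mpr h1δ.le)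
        _ = 1 := inv_mul_cancel₀ h1δ.ne'
    have hσy : ‖σ y‖ = (1+δ)⁻¹ * ‖σ x‖ := by
      rw [hy, map_smul, cnorm_smul, norm_inv, Real.norm_of_nonneg h1δ.le]
    have hmem : ‖σ y‖ ∈ S := ⟨y, hyM, hynorm, rfl⟩
    have hle := le_csSup hbdd hmem
    have halg : 1/2 - ε ≤ (1+δ)⁻¹ * ‖σ x‖ := by
      have hδσ : δ * (C + 1) = ε := by
        rw [hδdef]
        field_simp
      have hkey : (1/2 - ε) * (1 + δ) ≤ 1/2 - C * (δ/2) := by nlinarith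
      calc 1/2 - ε = ((1/2 - ε) * (1+δ)) * (1+δ)⁻¹ := by field_simp
        _ ≤ ‖σ x‖ * (1+δ)⁻¹ := by
            refine mul_le_mul_of_nonneg_right ?_ (inv_nonneg.mpr h1δ.le)
            linarith
        _ = (1+δ)⁻¹ * ‖σ x‖ := mul_comm _ _
    calc (1:ℝ)/2 - ε ≤ (1+δ)⁻¹ * ‖σ x‖ := halg
      _ = ‖σ y‖ := hσy.symm
      _ ≤ sSup S := hle
  by_contra h
  push_neg at h
  have hpos : 0 < (1/2 - sSup S) / 2 := by linarith
  have := key _ hpos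
  linarith
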